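/- For m=0, M=1, the vector d(x) = (2a x₁/(1-2a(1-x₃)), 4a(1-2a)² x₁²/((1-4a)[1-2a(1-x₃)]²), 1) is in the kernel of the Hessian of B at every interior point x of the domain, i.e., (d²B)(x)·d(x) = 0; in particular det(d²B)(x) = 0. -/

import Mathlib

open ContinuousLinearMap in
noncomputable def SL1 : (ℝ × ℝ × ℝ) →L[ℝ] ℝ := fst ℝ ℝ (ℝ × ℝ)
open ContinuousLinearMap in
noncomputable def SL2 : (ℝ × ℝ × ℝ) →L[ℝ] ℝ := (fst ℝ ℝ ℝ).comp (snd ℝ ℝ (ℝ × ℝ))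
open ContinuousLinearMap in
noncomputable def SL3 : (ℝ × ℝ × ℝ) →L[ℝ] ℝ := (snd ℝ ℝ ℝ).comp (snd ℝ ℝ (ℝ × ℝ))

@[simp] lemma SL1_apply (v : ℝ × ℝ × ℝ) : SL1 v = v.1 := rfl
@[simp] lemma SL2_apply (v : ℝ × ℝ × ℝ) : SL2 v = v.2.1 := rfl
@[simp] lemma SL3_apply (v : ℝ × ℝ × ℝ) : SL3 v = v.2.2 := rfl

lemma hSL1 (y : ℝ × ℝ × ℝ) : HasFDerivAt (fun z : ℝ × ℝ × ℝ => z.1) SL1 y := hasFDerivAt_fst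
lemma hSL2 (y : ℝ × ℝ × ℝ) : HasFDerivAt (fun z : ℝ × ℝ × ℝ => z.2.1) SL2 y :=
  hasFDerivAt_fst.comp y hasFDerivAt_snd
lemma hSL3 (y : ℝ × ℝ × ℝ) : HasFDerivAt (fun z : ℝ × ℝ × ℝ => z.2.2) SL3 y :=
  hasFDerivAt_snd.comp y hasFDerivAt_snd

lemma myDiv {E : Type*} [NormedAddCommGroup E] [NormedSpace ℝ E] {f g : E → ℝ}
    {f' g' : E →L[ℝ] ℝ} {x : E} (hf : HasFDerivAt f f' x) (hg : HasFDerivAt g g' x)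
    (h0 : g x ≠ 0) :
    HasFDerivAt (fun y => f y / g y) ((g x)⁻¹ • f' + (-(f x) / (g x)^2) • g') x := by
  have hinv : HasFDerivAt (fun y => (g y)⁻¹) ((-((g x) ^ 2)⁻¹) • g') x := by
    have := (hasDerivAt_inv h0).comp_hasFDerivAt x hg
    simp only [Function.comp_def] at this
    convert this using 1
  have h := hf.fun_mul hinv
  have heq : (fun y => f y / g y) = fun y => f y * (g y)⁻¹ := by
    funext z; rw [div_eq_mul_inv]
  rw [heq]
  refine h.congr_fderiv ?_
  ext v
  simp [smul_eq_mul]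
  ring

/-- Gradient formula for B at an interior point. -/
lemma gradB (a B : ℝ × ℝ × ℝ → ℝ) (y : ℝ × ℝ × ℝ) {a' : (ℝ × ℝ × ℝ) →L[ℝ] ℝ}
    (hy2 : 0 < y.2.1) (hy3 : 0 < y.2.2) (hy4 : y.2.2 < 1)
    (ht0 : 0 < a y) (ht4 : a y < 1/4)
    (hcon : y.1^2/y.2.1 = ((1 - 2*(a y)*(1 - y.2.2))/(1 - 2*(a y)))^2 *
      ((1 - 4*(a y))/(1 - 4*(a y)*(1 - y.2.2))))
    (hBev : B =ᶠ[nhds y] fun z => -z.1^2/(2*(a z)*(1 - 2*(a z)*(1 - z.2.2))) +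
      z.2.1/(2*(a z)*(1 - 2*(a z))))
    (ha : HasFDerivAt a a' y) :
    HasFDerivAt B
      ((-y.1/((a y)*(1 - 2*(a y)*(1 - y.2.2)))) • SL1
        + (1/(2*(a y)*(1 - 2*(a y)))) • SL2
        + ((y.1*y.1)/((1 - 2*(a y)*(1 - y.2.2))*(1 - 2*(a y)*(1 - y.2.2)))) • SL3) y := by
  have ht2 : 1 - 2*(a y) > 0 := by linarith
  have hDpos : 0 < 1 - 2*(a y)*(1 - y.2.2) := by nlinarith
  have hE4 : 0 < 1 - 4*(a y)*(1 - y.2.2) := by nlinarith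
  have h14 : 0 < 1 - 4*(a y) := by linarith
  have hne1 : 2*(a y)*(1 - 2*(a y)*(1 - y.2.2)) ≠ 0 := by positivity
  have hne2 : 2*(a y)*(1 - 2*(a y)) ≠ 0 := by positivity
  -- cleared constraint
  have hK0 : y.1^2*(1 - 2*(a y))^2*(1 - 4*(a y)*(1 - y.2.2))
      = y.2.1*(1 - 2*(a y)*(1 - y.2.2))^2*(1 - 4*(a y)) := by
    have h1 : y.2.1 ≠ 0 := ne_of_gt hy2
    have h2 : (1 - 2*(a y)) ≠ 0 := ne_of_gt ht2
    have h3 : (1 - 4*(a y)*(1 - y.2.2)) ≠ 0 := ne_of_gt hE4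
    field_simp at hcon
    rw [eq_div_iff (by intro h; apply h3; linarith)] at hcon
    linear_combination hcon
  -- derivative of the explicit formula
  have h2a := ha.const_mul 2
  have hs := (hSL3 y).const_sub 1
  have hD := (h2a.fun_mul hs).const_sub 1
  have hden1 := h2a.fun_mul hD
  have hden2 := h2a.fun_mul (h2a.const_sub 1)
  have hnum1 := ((hSL1 y).fun_mul (hSL1 y)).fun_neg
  have hterm1 := myDiv hnum1 hden1 hne1
  have hterm2 := myDiv (hSL2 y) hden2 hne2
  have hBm := hterm1.fun_add hterm2
  have hshape : (fun z : ℝ × ℝ × ℝ => -z.1^2/(2*(a z)*(1 - 2*(a z)*(1 - z.2.2))) +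
      z.2.1/(2*(a z)*(1 - 2*(a z))))
      = fun z => (-(z.1*z.1))/(2*(a z)*(1 - 2*(a z)*(1 - z.2.2))) +
        z.2.1/(2*(a z)*(1 - 2*(a z))) := by
    funext z; ring
  rw [hshape] at hBev
  have hfin := hBm.congr_of_eventuallyEq hBev
  refine hfin.congr_fderiv ?_
  refine ContinuousLinearMap.ext fun v => ?_
  obtain ⟨v1, v2, v3⟩ := v
  simp only [ContinuousLinearMap.add_apply, ContinuousLinearMap.coe_smul', Pi.smul_apply,
    SL1_apply, SL2_apply, SL3_apply, smul_eq_mul, ContinuousLinearMap.neg_apply,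
    ContinuousLinearMap.coe_sub', Pi.sub_apply, ContinuousLinearMap.zero_apply]
  have key : (2 * a y * (1 - 2 * a y * (1 - y.2.2)))⁻¹ * -(y.1 * v1 + y.1 * v1) +
        - -(y.1 * y.1) / (2 * a y * (1 - 2 * a y * (1 - y.2.2))) ^ 2 *
          (2 * a y * -(2 * a y * -v3 + (1 - y.2.2) * (2 * a' (v1, v2, v3))) +
            (1 - 2 * a y * (1 - y.2.2)) * (2 * a' (v1, v2, v3))) +
      ((2 * a y * (1 - 2 * a y))⁻¹ * v2 +
        -y.2.1 / (2 * a y * (1 - 2 * a y)) ^ 2 *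
          (2 * a y * -(2 * a' (v1, v2, v3)) + (1 - 2 * a y) * (2 * a' (v1, v2, v3))))
      = (-y.1 / (a y * (1 - 2 * a y * (1 - y.2.2))) * v1 + 1 / (2 * a y * (1 - 2 * a y)) * v2 +
      y.1 * y.1 / ((1 - 2 * a y * (1 - y.2.2)) * (1 - 2 * a y * (1 - y.2.2))) * v3)
      + (a' (v1, v2, v3)) *
        (y.1^2*(1 - 2*(a y))^2*(1 - 4*(a y)*(1 - y.2.2))
          - y.2.1*(1 - 2*(a y)*(1 - y.2.2))^2*(1 - 4*(a y)))
        / (2*(a y)^2*(1 - 2*(a y)*(1 - y.2.2))^2*(1 - 2*(a y))^2) := by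
    field_simp
    ring
  rw [key, hK0, sub_self]
  ring

set_option maxHeartbeats 2000000 in
theorem stmt12 (a B : ℝ × ℝ × ℝ → ℝ) (x : ℝ × ℝ × ℝ)
    (hdom : 0 < x.1^2 ∧ x.1^2 < x.2.1 ∧ 0 < x.2.2 ∧ x.2.2 < 1)
    (haI : ∀ y : ℝ × ℝ × ℝ, 0 < y.1^2 → y.1^2 < y.2.1 → 0 < y.2.2 → y.2.2 < 1 →
      a y ∈ Set.Ioo (0:ℝ) (1/4) ∧
      y.1^2/y.2.1 = ((1 - 2*(a y)*(1 - y.2.2))/(1 - 2*(a y)))^2 *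
        ((1 - 4*(a y))/(1 - 4*(a y)*(1 - y.2.2))))
    (hB : ∀ y : ℝ × ℝ × ℝ, 0 < y.1^2 → y.1^2 < y.2.1 → 0 < y.2.2 → y.2.2 < 1 →
      B y = -y.1^2/(2*(a y)*(1 - 2*(a y)*(1 - y.2.2))) + y.2.1/(2*(a y)*(1 - 2*(a y))))
    (hsmooth : ContDiffAt ℝ 2 a x) :
    (fderiv ℝ (fderiv ℝ B) x)
      (2*(a x)*x.1/(1 - 2*(a x)*(1 - x.2.2)),
       4*(a x)*(1 - 2*(a x))^2*x.1^2/((1 - 4*(a x))*(1 - 2*(a x)*(1 - x.2.2))^2),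
       1) = 0 := by
  obtain ⟨hx1, hx2, hx3, hx4⟩ := hdom
  obtain ⟨⟨ht0, ht4⟩, hconx⟩ := haI x hx1 hx2 hx3 hx4
  -- the open domain
  set U : Set (ℝ × ℝ × ℝ) := {y | 0 < y.1^2 ∧ y.1^2 < y.2.1 ∧ 0 < y.2.2 ∧ y.2.2 < 1} with hUdef
  have hU : IsOpen U := by
    have h1 : IsOpen {y : ℝ × ℝ × ℝ | 0 < y.1^2} :=
      isOpen_lt continuous_const (by fun_prop)
    have h2 : IsOpen {y : ℝ × ℝ × ℝ | y.1^2 < y.2.1} :=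
      isOpen_lt (by fun_prop) (by fun_prop)
    have h3 : IsOpen {y : ℝ × ℝ × ℝ | 0 < y.2.2} :=
      isOpen_lt continuous_const (by fun_prop)
    have h4 : IsOpen {y : ℝ × ℝ × ℝ | y.2.2 < 1} :=
      isOpen_lt (by fun_prop) continuous_const
    exact h1.inter (h2.inter (h3.inter h4))
  have hxU : x ∈ U := ⟨hx1, hx2, hx3, hx4⟩
  have hUmem : U ∈ nhds x := hU.mem_nhds hxU
  have ht2 : 0 < 1 - 2*(a x) := by linarith
  have hDpos : 0 < 1 - 2*(a x)*(1 - x.2.2) := by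
    have := mul_lt_of_lt_one_right (show (0:ℝ) < 2*(a x) by linarith)
      (show 1 - x.2.2 < 1 by linarith)
    linarith
  have hE4 : 0 < 1 - 4*(a x)*(1 - x.2.2) := by
    have := mul_lt_of_lt_one_right (show (0:ℝ) < 4*(a x) by linarith)
      (show 1 - x.2.2 < 1 by linarith)
    linarith
  have h14 : 0 < 1 - 4*(a x) := by linarith
  have hK0x : x.1^2*(1 - 2*(a x))^2*(1 - 4*(a x)*(1 - x.2.2))
      = x.2.1*(1 - 2*(a x)*(1 - x.2.2))^2*(1 - 4*(a x)) := by
    have h1 : x.2.1 ≠ 0 := ne_of_gt (lt_trans hx1 hx2)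
    have h2 : (1 - 2*(a x)) ≠ 0 := ne_of_gt ht2
    have h3 : (1 - 4*(a x)*(1 - x.2.2)) ≠ 0 := ne_of_gt hE4
    field_simp at hconx
    rw [eq_div_iff (by intro h; apply h3; linarith)] at hconx
    linear_combination hconx
  have hKtpos : 0 < -4 * (x.1 * x.1) * (1 - 2 * a x) *
            ((1 - 4 * a x * (1 - x.2.2)) + (1 - 2 * a x) * (1 - x.2.2))
          + 4 * x.2.1 * (1 - 2 * a x * (1 - x.2.2)) *
            ((1 - x.2.2) * (1 - 4 * a x) + (1 - 2 * a x * (1 - x.2.2))) := by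
    have e3 : -4 * (x.1 * x.1) * (1 - 2 * a x) *
            ((1 - 4 * a x * (1 - x.2.2)) + (1 - 2 * a x) * (1 - x.2.2))
          + 4 * x.2.1 * (1 - 2 * a x * (1 - x.2.2)) *
            ((1 - x.2.2) * (1 - 4 * a x) + (1 - 2 * a x * (1 - x.2.2)))
        = 8 * a x * x.2.1 * (1 - 2 * a x * (1 - x.2.2)) *
            ((1 - 2 * a x * (1 - x.2.2)) * (1 - 4 * a x * (1 - x.2.2))
              - (1 - x.2.2) * (1 - x.2.2) * (1 - 4 * a x) * (1 - 2 * a x))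
            / ((1 - 2 * a x) * (1 - 4 * a x * (1 - x.2.2)))
          - (4 * ((1 - 4 * a x * (1 - x.2.2)) + (1 - 2 * a x) * (1 - x.2.2))
              / ((1 - 2 * a x) * (1 - 4 * a x * (1 - x.2.2)))) *
            (x.1 ^ 2 * (1 - 2 * a x) ^ 2 * (1 - 4 * a x * (1 - x.2.2))
              - x.2.1 * (1 - 2 * a x * (1 - x.2.2)) ^ 2 * (1 - 4 * a x)) := by
      field_simp
      ring
    rw [e3, hK0x, sub_self, mul_zero, sub_zero]
    have hq : 0 < x.2.1 := lt_trans hx1 hx2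
    have hinner : (1 - x.2.2) * (1 - x.2.2) * (1 - 4 * a x) * (1 - 2 * a x)
        < (1 - 2 * a x * (1 - x.2.2)) * (1 - 4 * a x * (1 - x.2.2)) := by
      have hs1 : 1 - x.2.2 < 1 := by linarith
      have hs0 : 0 < 1 - x.2.2 := by linarith
      nlinarith [mul_pos ht2 h14, mul_pos ht0 hx3, mul_pos (mul_pos ht0 hx3) h14,
        mul_pos (mul_pos ht0 hx3) ht2, mul_pos hs0 hs0, sq_nonneg (1 - x.2.2),
        mul_pos (mul_pos hs0 hs0) (mul_pos ht2 h14)]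
    apply div_pos
    · have := mul_pos (mul_pos (mul_pos (by linarith : (0:ℝ) < 8 * a x) hq) hDpos)
        (by linarith : (0:ℝ) < (1 - 2 * a x * (1 - x.2.2)) * (1 - 4 * a x * (1 - x.2.2))
          - (1 - x.2.2) * (1 - x.2.2) * (1 - 4 * a x) * (1 - 2 * a x))
      linarith
    · exact mul_pos ht2 hE4
  have hdiffev : ∀ᶠ y in nhds x, DifferentiableAt ℝ a y := by
    filter_upwards [hsmooth.eventually (by norm_num)] with y hy
    exact hy.differentiableAt two_ne_zero
  -- gradient of B near x
  have hGev : fderiv ℝ B =ᶠ[nhds x]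
      (fun y => (-y.1/((a y)*(1 - 2*(a y)*(1 - y.2.2)))) • SL1
        + (1/(2*(a y)*(1 - 2*(a y)))) • SL2
        + ((y.1*y.1)/((1 - 2*(a y)*(1 - y.2.2))*(1 - 2*(a y)*(1 - y.2.2)))) • SL3) := by
    filter_upwards [hU.mem_nhds hxU, hdiffev] with y hyU hyd
    obtain ⟨hy1, hy2, hy3, hy4⟩ := hyU
    obtain ⟨⟨hyt0, hyt4⟩, hycon⟩ := haI y hy1 hy2 hy3 hy4
    have hyBev : B =ᶠ[nhds y] fun z => -z.1^2/(2*(a z)*(1 - 2*(a z)*(1 - z.2.2))) +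
        z.2.1/(2*(a z)*(1 - 2*(a z))) := by
      filter_upwards [hU.mem_nhds ⟨hy1, hy2, hy3, hy4⟩] with z hz
      exact hB z hz.1 hz.2.1 hz.2.2.1 hz.2.2.2
    exact (gradB a B y (lt_trans hy1 hy2) hy3 hy4 hyt0 hyt4 hycon hyBev
      hyd.hasFDerivAt).fderiv
  have h2nd : fderiv ℝ (fderiv ℝ B) x = fderiv ℝ
      (fun y => (-y.1/((a y)*(1 - 2*(a y)*(1 - y.2.2)))) • SL1
        + (1/(2*(a y)*(1 - 2*(a y)))) • SL2
        + ((y.1*y.1)/((1 - 2*(a y)*(1 - y.2.2))*(1 - 2*(a y)*(1 - y.2.2)))) • SL3) x :=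
    hGev.fderiv_eq
  -- abbreviations
  have ha : HasFDerivAt a (fderiv ℝ a x) x :=
    (hsmooth.differentiableAt two_ne_zero).hasFDerivAt
  set a' : (ℝ × ℝ × ℝ) →L[ℝ] ℝ := fderiv ℝ a x with ha'def
  set d : ℝ × ℝ × ℝ :=
      (2*(a x)*x.1/(1 - 2*(a x)*(1 - x.2.2)),
       4*(a x)*(1 - 2*(a x))^2*x.1^2/((1 - 4*(a x))*(1 - 2*(a x)*(1 - x.2.2))^2),
       1) with hddef
  -- the cleared-constraint function K vanishes near x
  have hs := (hSL3 x).const_sub 1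
  have h1m2a := (ha.const_mul 2).const_sub 1
  have hD := ((ha.const_mul 2).fun_mul hs).const_sub 1
  have hE := ((ha.const_mul 4).fun_mul hs).const_sub 1
  have h14' := (ha.const_mul 4).const_sub 1
  have hKfd := ((((hSL1 x).fun_mul (hSL1 x)).fun_mul (h1m2a.fun_mul h1m2a)).fun_mul hE).fun_sub
    (((hSL2 x).fun_mul (hD.fun_mul hD)).fun_mul h14')
  have hKev : (fun y : ℝ × ℝ × ℝ => y.1*y.1*((1 - 2*a y)*(1 - 2*a y))*(1 - 4*a y*(1 - y.2.2))
      - y.2.1*((1 - 2*a y*(1 - y.2.2))*(1 - 2*a y*(1 - y.2.2)))*(1 - 4*a y))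
      =ᶠ[nhds x] (fun _ => (0:ℝ)) := by
    filter_upwards [hU.mem_nhds hxU] with y hyU
    obtain ⟨hy1, hy2, hy3, hy4⟩ := hyU
    obtain ⟨⟨hyt0, hyt4⟩, hycon⟩ := haI y hy1 hy2 hy3 hy4
    have hyt2 : 0 < 1 - 2*(a y) := by linarith
    have hyE4 : 0 < 1 - 4*(a y)*(1 - y.2.2) := by
      have := mul_lt_of_lt_one_right (show (0:ℝ) < 4*(a y) by linarith)
        (show 1 - y.2.2 < 1 by linarith)
      linarith
    have h1 : y.2.1 ≠ 0 := ne_of_gt (lt_trans hy1 hy2)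
    have h2 : (1 - 2*(a y)) ≠ 0 := ne_of_gt hyt2
    have h3 : (1 - 4*(a y)*(1 - y.2.2)) ≠ 0 := ne_of_gt hyE4
    field_simp at hycon
    rw [eq_div_iff (by intro h; apply h3; linarith)] at hycon
    show _ = (0:ℝ)
    linear_combination hycon
  have hMKeq := hKfd.fderiv
  rw [hKev.fderiv_eq] at hMKeq
  simp only [fderiv_fun_const] at hMKeq
  have hMKd := congrArg (fun L : (ℝ × ℝ × ℝ) →L[ℝ] ℝ => L d) hMKeq
  simp only [ContinuousLinearMap.add_apply, ContinuousLinearMap.sub_apply,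
    ContinuousLinearMap.neg_apply, ContinuousLinearMap.coe_smul', Pi.smul_apply,
    ContinuousLinearMap.smul_apply, smul_eq_mul, SL1_apply, SL2_apply, SL3_apply,
    Pi.zero_apply, ContinuousLinearMap.zero_apply, nsmul_eq_mul, Nat.cast_ofNat] at hMKd
  have key2 : x.1 * x.1 * ((1 - 2 * a x) * (1 - 2 * a x)) * -(4 * a x * -1 + (1 - x.2.2) * (4 * a' d)) +
        (1 - 4 * a x * (1 - x.2.2)) *
          (x.1 * x.1 * ((1 - 2 * a x) * -(2 * a' d) + (1 - 2 * a x) * -(2 * a' d)) +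
            (1 - 2 * a x) * (1 - 2 * a x) *
              (x.1 * (2 * a x * x.1 / (1 - 2 * a x * (1 - x.2.2))) +
                x.1 * (2 * a x * x.1 / (1 - 2 * a x * (1 - x.2.2))))) -
      (x.2.1 * ((1 - 2 * a x * (1 - x.2.2)) * (1 - 2 * a x * (1 - x.2.2))) * -(4 * a' d) +
        (1 - 4 * a x) *
          (x.2.1 *
              ((1 - 2 * a x * (1 - x.2.2)) * -(2 * a x * -1 + (1 - x.2.2) * (2 * a' d)) +
                (1 - 2 * a x * (1 - x.2.2)) * -(2 * a x * -1 + (1 - x.2.2) * (2 * a' d))) +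
            (1 - 2 * a x * (1 - x.2.2)) * (1 - 2 * a x * (1 - x.2.2)) *
              (4 * a x * (1 - 2 * a x) ^ 2 * x.1 ^ 2 / ((1 - 4 * a x) * (1 - 2 * a x * (1 - x.2.2)) ^ 2))))
      = (4 * a x / (1 - 2 * a x * (1 - x.2.2))) *
          (x.1 ^ 2 * (1 - 2 * a x) ^ 2 * (1 - 4 * a x * (1 - x.2.2))
            - x.2.1 * (1 - 2 * a x * (1 - x.2.2)) ^ 2 * (1 - 4 * a x))
        + (-4 * (x.1 * x.1) * (1 - 2 * a x) *
            ((1 - 4 * a x * (1 - x.2.2)) + (1 - 2 * a x) * (1 - x.2.2))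
          + 4 * x.2.1 * (1 - 2 * a x * (1 - x.2.2)) *
            ((1 - x.2.2) * (1 - 4 * a x) + (1 - 2 * a x * (1 - x.2.2)))) * (a' d) := by
    have hne14 : (1 - a x * 4) ≠ 0 := ne_of_gt (by linarith)
    field_simp
    ring
  rw [key2, hK0x, sub_self, mul_zero, zero_add] at hMKd
  have hlam : a' d = 0 := by
    rcases mul_eq_zero.mp hMKd.symm with h | h
    · exact absurd h (ne_of_gt hKtpos)
    · exact h
  clear hMKd key2 hKfd hKev hMKeq hKtpos hs h1m2a hD hE h14' hdiffev hGev
  have hs := (hSL3 x).const_sub 1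
  have hD := ((ha.const_mul 2).fun_mul hs).const_sub 1
  have hne_c1 : a x * (1 - 2*(a x)*(1 - x.2.2)) ≠ 0 := by positivity
  have hne_c2 : 2*(a x)*(1 - 2*(a x)) ≠ 0 := by positivity
  have hne_c3 : (1 - 2*(a x)*(1 - x.2.2))*(1 - 2*(a x)*(1 - x.2.2)) ≠ 0 := by positivity
  have hc1 := myDiv ((hSL1 x).fun_neg) (ha.fun_mul hD) hne_c1
  have hc2 := myDiv (hasFDerivAt_const (1:ℝ) x) ((ha.const_mul 2).fun_mul
    ((ha.const_mul 2).const_sub 1)) hne_c2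
  have hc3 := myDiv ((hSL1 x).fun_mul (hSL1 x)) (hD.fun_mul hD) hne_c3
  have hGder := ((hc1.smul_const SL1).fun_add (hc2.smul_const SL2)).fun_add (hc3.smul_const SL3)
  rw [h2nd, hGder.fderiv]
  simp only [ContinuousLinearMap.add_apply, ContinuousLinearMap.smulRight_apply,
    ContinuousLinearMap.sub_apply, ContinuousLinearMap.neg_apply,
    ContinuousLinearMap.coe_smul', Pi.smul_apply, ContinuousLinearMap.smul_apply,
    smul_eq_mul, SL1_apply, SL2_apply, SL3_apply, nsmul_eq_mul, Nat.cast_ofNat,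
    ContinuousLinearMap.zero_apply]
  have z1 : (a x * (1 - 2 * a x * (1 - x.2.2)))⁻¹ * -(2 * a x * x.1 / (1 - 2 * a x * (1 - x.2.2))) +
            - -x.1 / (a x * (1 - 2 * a x * (1 - x.2.2))) ^ 2 *
              (a x * -(2 * a x * -1 + (1 - x.2.2) * (2 * a' d)) + (1 - 2 * a x * (1 - x.2.2)) * a' d)
      = 0 := by
    rw [hlam]
    field_simp
    try ring
  have z2 : (2 * a x * (1 - 2 * a x))⁻¹ * 0 +
            -1 / (2 * a x * (1 - 2 * a x)) ^ 2 * (2 * a x * -(2 * a' d) + (1 - 2 * a x) * (2 * a' d))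
      = 0 := by
    rw [hlam]
    ring
  have z3 : ((1 - 2 * a x * (1 - x.2.2)) * (1 - 2 * a x * (1 - x.2.2)))⁻¹ *
            (x.1 * (2 * a x * x.1 / (1 - 2 * a x * (1 - x.2.2))) +
              x.1 * (2 * a x * x.1 / (1 - 2 * a x * (1 - x.2.2)))) +
          -(x.1 * x.1) / ((1 - 2 * a x * (1 - x.2.2)) * (1 - 2 * a x * (1 - x.2.2))) ^ 2 *
            ((1 - 2 * a x * (1 - x.2.2)) * -(2 * a x * -1 + (1 - x.2.2) * (2 * a' d)) +
              (1 - 2 * a x * (1 - x.2.2)) * -(2 * a x * -1 + (1 - x.2.2) * (2 * a' d)))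
      = 0 := by
    rw [hlam]
    field_simp
    try ring
  rw [z1, z2, z3]
  simp
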